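/- Let G be a finite 2-group acting on a finite set F, and let φ : F → R be a G-invariant function into a commutative ring R of characteristic 2. If N₁ and N₂ are two subgroups of G such that φ is both N₁-invariant and N₂-invariant in the induced sense, then the sum of φ over F^{N₁} equals the sum of φ over F^{N₂}. -/
import Mathlib

open MulAction in
private theorem key2 {H F R : Type*} [Group H] [Fintype H] [MulAction H F] [Fintype F]
    [CommRing R] (hchar : (2 : R) = 0) (n : ℕ) (hc : Fintype.card H = 2 ^ n) (φ : F → R)
    (hφ : ∀ (g : H) (f : F), φ (g • f) = φ f) :
    ∑ f ∈ (Set.toFinite {f : F | ∀ g : H, g • f = f}).toFinset, φ f = ∑ f, φ f := by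
  classical
  have fiber_eq : ∀ q : Quotient (orbitRel H F),
      Finset.univ.filter (fun f => (⟦f⟧ : Quotient (orbitRel H F)) = q) =
        (orbit H q.out).toFinset := by
    intro q
    ext f
    simp only [Finset.mem_filter, Finset.mem_univ, true_and, Set.mem_toFinset]
    constructor
    · intro h
      have h' : (⟦f⟧ : Quotient (orbitRel H F)) = ⟦q.out⟧ := by rw [h, Quotient.out_eq]
      exact Quotient.eq.mp h'
    · intro h
      have h' : (⟦f⟧ : Quotient (orbitRel H F)) = ⟦q.out⟧ := Quotient.eq.mpr h
      rw [h', Quotient.out_eq]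
  set c : Quotient (orbitRel H F) → R :=
    fun q => ∑ f ∈ Finset.univ.filter (fun f => (⟦f⟧ : Quotient (orbitRel H F)) = q), φ f
    with hcdef
  have hconst : ∀ q, c q = ((orbit H q.out).toFinset.card : R) * φ q.out := by
    intro q
    rw [hcdef]
    simp only
    rw [fiber_eq q]
    rw [Finset.sum_congr rfl (fun f hf => ?_), Finset.sum_const, nsmul_eq_mul]
    rcases Set.mem_toFinset.mp hf with ⟨g, rfl⟩
    exact hφ g q.out
  have hcardpow : ∀ q : Quotient (orbitRel H F),
      ∃ k, (orbit H q.out).toFinset.card = 2 ^ k := by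
    intro q
    have hdvd : Fintype.card (orbit H q.out) ∣ Fintype.card H :=
      ⟨_, (card_orbit_mul_card_stabilizer_eq_card_group H q.out).symm⟩
    rw [hc] at hdvd
    obtain ⟨k, _, hk⟩ := (Nat.dvd_prime_pow Nat.prime_two).mp hdvd
    exact ⟨k, by rw [Set.toFinset_card, hk]⟩
  have hzero : ∀ q : Quotient (orbitRel H F), (orbit H q.out).toFinset.card ≠ 1 → c q = 0 := by
    intro q hne
    obtain ⟨k, hk⟩ := hcardpow q
    have hkpos : k ≠ 0 := by rintro rfl; simp [hk] at hne
    have heven : 2 ∣ (orbit H q.out).toFinset.card := by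
      rw [hk]; exact dvd_pow_self 2 hkpos
    obtain ⟨m, hm⟩ := heven
    rw [hconst q, hm]
    push_cast
    rw [hchar]
    ring
  have hsum : ∑ f, φ f = ∑ q : Quotient (orbitRel H F), c q := by
    rw [hcdef]
    exact (Finset.sum_fiberwise Finset.univ (fun f => (⟦f⟧ : Quotient (orbitRel H F))) φ).symm
  rw [hsum]
  refine Finset.sum_bij_ne_zero (fun f _ _ => (⟦f⟧ : Quotient (orbitRel H F))) ?_ ?_ ?_ ?_
  · intro f hf hne; exact Finset.mem_univ _
  · intro f₁ h₁ hn₁ f₂ h₂ hn₂ heq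
    have hfix₂ : ∀ g : H, g • f₂ = f₂ := by simpa using h₂
    rcases Quotient.eq.mp heq with ⟨g, hg⟩
    rw [← hg]; exact hfix₂ g
  · intro q _ hq
    have hcard1 : (orbit H q.out).toFinset.card = 1 := by
      by_contra h; exact hq (hzero q h)
    obtain ⟨a, ha⟩ := Finset.card_eq_one.mp hcard1
    have houtmem : q.out ∈ (orbit H q.out).toFinset := by
      simp [mem_orbit_self]
    have haout : a = q.out := by rw [ha] at houtmem; exact (Finset.mem_singleton.mp houtmem).symm
    rw [haout] at ha
    have hfix : ∀ g : H, g • q.out = q.out := by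
      intro g
      have hmem : g • q.out ∈ (orbit H q.out).toFinset := by simp [mem_orbit]
      rw [ha] at hmem
      exact Finset.mem_singleton.mp hmem
    have hφa : φ q.out ≠ 0 := by
      intro h0
      apply hq
      rw [hconst q, h0, mul_zero]
    exact ⟨q.out, by simpa using hfix, hφa, Quotient.out_eq q⟩
  · intro f hf hne
    have hfix : ∀ g : H, g • f = f := by simpa using hf
    have hout : (⟦f⟧ : Quotient (orbitRel H F)).out = f := by
      have hmem : (⟦f⟧ : Quotient (orbitRel H F)).out ∈ orbit H f :=
        Quotient.eq.mp (Quotient.out_eq (⟦f⟧ : Quotient (orbitRel H F)))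
      rcases hmem with ⟨g, hg⟩
      rw [← hg]; exact hfix g
    have horb : orbit H (⟦f⟧ : Quotient (orbitRel H F)).out = {f} := by
      rw [hout]
      ext x
      constructor
      · rintro ⟨g, rfl⟩; exact hfix g
      · rintro rfl; exact mem_orbit_self _
    rw [hconst, horb, hout]
    simp

theorem stmt1 {G F R : Type*} [Group G] [Fintype G] [MulAction G F] [Fintype F] [CommRing R]
    (hchar : (2 : R) = 0)
    (n : ℕ) (hcard : Fintype.card G = 2 ^ n)
    (N₁ N₂ : Subgroup G)
    (φ : F → R)
    (hφ₁ : ∀ g ∈ N₁, ∀ f : F, φ (g • f) = φ f)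
    (hφ₂ : ∀ g ∈ N₂, ∀ f : F, φ (g • f) = φ f) :
    ∑ f ∈ (Set.toFinite {f : F | ∀ g ∈ N₁, g • f = f}).toFinset, φ f =
      ∑ f ∈ (Set.toFinite {f : F | ∀ g ∈ N₂, g • f = f}).toFinset, φ f := by
  classical
  have hmain : ∀ N : Subgroup G, (∀ g ∈ N, ∀ f : F, φ (g • f) = φ f) →
      ∑ f ∈ (Set.toFinite {f : F | ∀ g ∈ N, g • f = f}).toFinset, φ f = ∑ f, φ f := by
    intro N hφN
    have hdvd : Fintype.card N ∣ 2 ^ n := by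
      rw [← hcard, ← Nat.card_eq_fintype_card, ← Nat.card_eq_fintype_card]
      exact Subgroup.card_subgroup_dvd_card N
    obtain ⟨k, _, hk⟩ := (Nat.dvd_prime_pow Nat.prime_two).mp hdvd
    have hkey := key2 (H := N) (F := F) hchar k hk φ (fun g f => hφN g g.2 f)
    rw [← hkey]
    apply Finset.sum_congr _ (fun _ _ => rfl)
    ext f
    simp only [Set.Finite.mem_toFinset, Set.mem_setOf_eq]
    constructor
    · intro h g; exact h g g.2
    · intro h g hg; exact h ⟨g, hg⟩
  rw [hmain N₁ hφ₁, hmain N₂ hφ₂]
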